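/- Let $\nu$ be a Lévy measure on $\mathbb{R}^d$ (i.e. $\nu(\{0\})=0$ and $\int_{|z|\le 1}|z|^2\,\nu(dz)<\infty$) with $\int_{|z|\le 1}|z|\,\nu(dz)<\infty$, and define $h(x) = \int_{|z|>x}\nu(dz) + x^{-2}\int_{|z|\le x}|z|^2\,\nu(dz) + x^{-1}\left|\int_{|z|\le x} \frac{z|z|^2}{1+|z|^2}\,\nu(dz)\right|$ for $x>0$. Let $\beta_0 = \inf\{\eta>0 : \int_{|z|\le 1}|z|^{\eta}\,\nu(dz)<\infty\}$ be the Blumenthal–Getoor index. Then for every $\varepsilon>0$, $\lim_{x\to 0^+} x^{\beta_0+\varepsilon} h(x) = 0$. -/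

import Mathlib

open MeasureTheory Filter Set

set_option maxHeartbeats 1000000

/-- Upper bound for the Blumenthal–Getoor index of the Pruitt function `h`. -/
theorem stmt0 {d : ℕ} (ν : Measure (EuclideanSpace ℝ (Fin d)))
    (hν0 : ν {0} = 0)
    (hν2 : IntegrableOn (fun z => ‖z‖ ^ 2) {z | ‖z‖ ≤ 1} ν)
    (hνtail : ν {z | 1 < ‖z‖} < ⊤)
    (hν1 : IntegrableOn (fun z => ‖z‖) {z | ‖z‖ ≤ 1} ν)
    (h : ℝ → ℝ)
    (hdef : ∀ x > 0, h x = (ν {z | x < ‖z‖}).toReal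
      + x ^ (-2 : ℝ) * (∫ z in {z | ‖z‖ ≤ x}, ‖z‖ ^ 2 ∂ν)
      + x⁻¹ * ‖∫ z in {z | ‖z‖ ≤ x}, (‖z‖ ^ 2 / (1 + ‖z‖ ^ 2)) • z ∂ν‖)
    (β₀ : ℝ)
    (hβ₀ : β₀ = sInf {η : ℝ | 0 < η ∧
      IntegrableOn (fun z => ‖z‖ ^ η) {z | ‖z‖ ≤ 1} ν}) :
    ∀ ε > 0, Tendsto (fun x : ℝ => x ^ (β₀ + ε) * h x)
      (nhdsWithin 0 (Ioi 0)) (nhds 0) := by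
  intro ε hε
  set S : Set ℝ := {η : ℝ | 0 < η ∧
      IntegrableOn (fun z => ‖z‖ ^ η) {z | ‖z‖ ≤ 1} ν} with hS
  have h1S : (1:ℝ) ∈ S := ⟨one_pos, by simpa [Real.rpow_one] using hν1⟩
  have hSne : S.Nonempty := ⟨1, h1S⟩
  have hSbdd : BddBelow S := ⟨0, fun η hη => hη.1.le⟩
  have hβ0nn : 0 ≤ β₀ := hβ₀ ▸ le_csInf hSne (fun η hη => hη.1.le)
  have hβ1 : β₀ ≤ 1 := hβ₀ ▸ csInf_le hSbdd h1S
  set δ : ℝ := min ε 1 / 2 with hδdef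
  have hδ0 : 0 < δ := by
    have := lt_min hε one_pos
    positivity
  have hδε : δ < ε := by
    rcases min_le_iff.1 (le_refl (min ε 1)) with _ | _ <;>
      simp only [hδdef] <;> cases' le_total ε 1 with hc hc <;>
        simp [min_eq_left, min_eq_right, hc] <;> linarith
  have hδ1 : δ ≤ 1/2 := by
    have : min ε 1 ≤ 1 := min_le_right _ _
    simp only [hδdef]; linarith
  obtain ⟨η, hηS, hηlt⟩ : ∃ η ∈ S, η < β₀ + δ := by
    apply exists_lt_of_csInf_lt hSne
    rw [← hβ₀]; linarith
  obtain ⟨hη0, hηint⟩ := hηS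
  have hη2 : η ≤ 2 := by linarith
  set p : ℝ := β₀ + ε with hpdef
  have hp0 : 0 < p := by positivity
  set θ : ℝ := p - η with hθdef
  have hθ0 : 0 < θ := by simp only [hθdef, hpdef]; linarith
  set C : ℝ := ∫ z in {z | ‖z‖ ≤ 1}, ‖z‖ ^ η ∂ν with hC
  have hC0 : 0 ≤ C :=
    integral_nonneg fun z => Real.rpow_nonneg (norm_nonneg _) _
  set T : ℝ := (ν {z | 1 < ‖z‖}).toReal with hT
  have hT0 : 0 ≤ T := ENNReal.toReal_nonneg
  have hmeas : ∀ r : ℝ, MeasurableSet {z : EuclideanSpace ℝ (Fin d) | ‖z‖ ≤ r} :=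
    fun r => (isClosed_le continuous_norm continuous_const).measurableSet
  have hmeas' : ∀ r : ℝ, MeasurableSet {z : EuclideanSpace ℝ (Fin d) | r < ‖z‖} :=
    fun r => (isOpen_lt continuous_const continuous_norm).measurableSet
  -- pointwise bound
  have hpt : ∀ x : ℝ, 0 < x → ∀ z : EuclideanSpace ℝ (Fin d), ‖z‖ ≤ x →
      ‖z‖ ^ 2 ≤ x ^ (2 - η) * ‖z‖ ^ η := by
    intro x hx z hz
    have h1 : (‖z‖:ℝ) ^ (2:ℕ) = ‖z‖ ^ ((2-η) + η) := by
      rw [show (2 - η) + η = ((2:ℕ):ℝ) by push_cast; ring, Real.rpow_natCast]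
    rw [h1, Real.rpow_add' (norm_nonneg z) (by norm_num : (2 - η) + η ≠ 0)]
    exact mul_le_mul_of_nonneg_right
      (Real.rpow_le_rpow (norm_nonneg z) hz (by linarith))
      (Real.rpow_nonneg (norm_nonneg z) _)
  -- bounds on the small-ball integrals
  have key2 : ∀ x : ℝ, 0 < x → x < 1 →
      (∫ z in {z | ‖z‖ ≤ x}, ‖z‖ ^ 2 ∂ν) ≤ x ^ (2 - η) * C := by
    intro x hx0 hx1
    have hsub : {z : EuclideanSpace ℝ (Fin d) | ‖z‖ ≤ x} ⊆ {z | ‖z‖ ≤ 1} :=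
      fun z hz => le_trans hz hx1.le
    calc (∫ z in {z | ‖z‖ ≤ x}, ‖z‖ ^ 2 ∂ν)
        ≤ ∫ z in {z | ‖z‖ ≤ x}, x ^ (2 - η) * ‖z‖ ^ η ∂ν := by
          refine setIntegral_mono_on (hν2.mono_set hsub)
            ((hηint.mono_set hsub).const_mul _) (hmeas x) ?_
          exact fun z hz => hpt x hx0 z hz
      _ = x ^ (2 - η) * ∫ z in {z | ‖z‖ ≤ x}, ‖z‖ ^ η ∂ν := by
          rw [integral_const_mul]
      _ ≤ x ^ (2 - η) * C := by
          refine mul_le_mul_of_nonneg_left ?_ (Real.rpow_nonneg hx0.le _)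
          exact setIntegral_mono_set hηint
            (ae_of_all _ fun z => Real.rpow_nonneg (norm_nonneg _) _)
            (HasSubset.Subset.eventuallyLE hsub)
  have key3 : ∀ x : ℝ, 0 < x → x < 1 →
      ‖∫ z in {z | ‖z‖ ≤ x}, (‖z‖ ^ 2 / (1 + ‖z‖ ^ 2)) • z ∂ν‖ ≤ x ^ (2 - η) * C := by
    intro x hx0 hx1
    have hsub : {z : EuclideanSpace ℝ (Fin d) | ‖z‖ ≤ x} ⊆ {z | ‖z‖ ≤ 1} :=
      fun z hz => le_trans hz hx1.le
    calc ‖∫ z in {z | ‖z‖ ≤ x}, (‖z‖ ^ 2 / (1 + ‖z‖ ^ 2)) • z ∂ν‖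
        ≤ ∫ z in {z | ‖z‖ ≤ x}, ‖(‖z‖ ^ 2 / (1 + ‖z‖ ^ 2)) • z‖ ∂ν :=
          norm_integral_le_integral_norm _
      _ ≤ ∫ z in {z | ‖z‖ ≤ x}, x ^ (2 - η) * ‖z‖ ^ η ∂ν := by
          refine integral_mono_of_nonneg (ae_of_all _ fun z => norm_nonneg _)
            ((hηint.mono_set hsub).const_mul _) ?_
          refine (ae_restrict_iff' (hmeas x)).2 (ae_of_all _ fun z hz => ?_)
          have hz' : ‖z‖ ≤ x := hz
          have h1 : ‖(‖z‖ ^ 2 / (1 + ‖z‖ ^ 2)) • z‖ ≤ ‖z‖ ^ 2 := by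
            rw [norm_smul, Real.norm_eq_abs,
              abs_of_nonneg (by positivity : (0:ℝ) ≤ ‖z‖ ^ 2 / (1 + ‖z‖ ^ 2))]
            calc ‖z‖ ^ 2 / (1 + ‖z‖ ^ 2) * ‖z‖ ≤ ‖z‖ ^ 2 * 1 := by
                  apply mul_le_mul
                  · exact div_le_self (by positivity) (by nlinarith [sq_nonneg ‖z‖])
                  · linarith [hz'.trans hx1.le]
                  · exact norm_nonneg z
                  · positivity
              _ = ‖z‖ ^ 2 := mul_one _
          exact h1.trans (hpt x hx0 z hz')
      _ = x ^ (2 - η) * ∫ z in {z | ‖z‖ ≤ x}, ‖z‖ ^ η ∂ν := by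
          rw [integral_const_mul]
      _ ≤ x ^ (2 - η) * C := by
          refine mul_le_mul_of_nonneg_left ?_ (Real.rpow_nonneg hx0.le _)
          exact setIntegral_mono_set hηint
            (ae_of_all _ fun z => Real.rpow_nonneg (norm_nonneg _) _)
            (HasSubset.Subset.eventuallyLE hsub)
  -- tail bound
  have key1 : ∀ x : ℝ, 0 < x → x < 1 →
      x ^ p * (ν {z | x < ‖z‖}).toReal ≤ C * x ^ θ + T * x ^ p := by
    intro x hx0 hx1
    set A1 : Set (EuclideanSpace ℝ (Fin d)) := {z | x < ‖z‖} ∩ {z | ‖z‖ ≤ 1} with hA1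
    have hA1meas : MeasurableSet A1 := (hmeas' x).inter (hmeas 1)
    have hA1fin : ν A1 < ⊤ := by
      have hx' : (0:ℝ) < x ^ η := Real.rpow_pos_of_pos hx0 _
      have h2 := hηint.measure_ge_lt_top hx'
      refine lt_of_le_of_lt ?_ h2
      rw [Measure.restrict_apply
        (isClosed_le continuous_const
          (continuous_norm.rpow_const fun z => Or.inr hη0.le)).measurableSet]
      apply measure_mono
      rintro z ⟨hz1, hz2⟩
      exact ⟨Real.rpow_le_rpow hx0.le hz1.le hη0.le, hz2⟩
    have hxη : x ^ η * (ν A1).toReal ≤ C := by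
      have e1 : x ^ η * (ν A1).toReal = ∫ _ in A1, x ^ η ∂ν := by
        rw [setIntegral_const, smul_eq_mul, mul_comm]; rfl
      rw [e1]
      calc (∫ _ in A1, x ^ η ∂ν)
          ≤ ∫ z in A1, ‖z‖ ^ η ∂ν := by
            refine setIntegral_mono_on
              (integrableOn_const hA1fin.ne enorm_ne_top)
              (hηint.mono_set inter_subset_right) hA1meas ?_
            exact fun z hz => Real.rpow_le_rpow hx0.le hz.1.le hη0.le
        _ ≤ C := setIntegral_mono_set hηint
            (ae_of_all _ fun z => Real.rpow_nonneg (norm_nonneg _) _)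
            (HasSubset.Subset.eventuallyLE inter_subset_right)
    have hsplit : (ν {z | x < ‖z‖}).toReal ≤ (ν A1).toReal + T := by
      have hle : ν {z | x < ‖z‖} ≤ ν A1 + ν {z | 1 < ‖z‖} := by
        refine le_trans (measure_mono ?_) (measure_union_le _ _)
        intro z hz
        rcases le_or_gt ‖z‖ 1 with hc | hc
        · exact Or.inl ⟨hz, hc⟩
        · exact Or.inr hc
      have hfin : ν A1 + ν {z | 1 < ‖z‖} ≠ ⊤ :=
        (ENNReal.add_lt_top.2 ⟨hA1fin, hνtail⟩).ne
      calc (ν {z | x < ‖z‖}).toReal ≤ (ν A1 + ν {z | 1 < ‖z‖}).toReal :=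
            ENNReal.toReal_mono hfin hle
        _ = (ν A1).toReal + T := ENNReal.toReal_add hA1fin.ne hνtail.ne
    have hxp : (0:ℝ) ≤ x ^ p := Real.rpow_nonneg hx0.le _
    have e2 : x ^ p = x ^ θ * x ^ η := by
      rw [← Real.rpow_add hx0]; congr 1; simp [hθdef]
    calc x ^ p * (ν {z | x < ‖z‖}).toReal
        ≤ x ^ p * ((ν A1).toReal + T) := mul_le_mul_of_nonneg_left hsplit hxp
      _ = x ^ θ * (x ^ η * (ν A1).toReal) + T * x ^ p := by rw [e2]; ring
      _ ≤ x ^ θ * C + T * x ^ p := by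
          refine add_le_add (mul_le_mul_of_nonneg_left hxη
            (Real.rpow_nonneg hx0.le _)) (le_refl _)
      _ = C * x ^ θ + T * x ^ p := by ring
  -- the squeeze
  have hmem : ∀ᶠ x in nhdsWithin (0:ℝ) (Ioi 0), x ∈ Ioo (0:ℝ) 1 :=
    Ioo_mem_nhdsGT_of_mem ⟨le_refl 0, one_pos⟩
  have base : ∀ r : ℝ, 0 < r →
      Tendsto (fun x : ℝ => x ^ r) (nhdsWithin 0 (Ioi 0)) (nhds 0) := by
    intro r hr
    have h1 := (Real.continuousAt_rpow_const 0 r (Or.inr hr.le)).tendsto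
    rw [Real.zero_rpow hr.ne'] at h1
    exact h1.mono_left nhdsWithin_le_nhds
  have hg : Tendsto (fun x : ℝ => C * x ^ θ + T * x ^ p + C * x ^ θ + C * x ^ (θ + 1))
      (nhdsWithin 0 (Ioi 0)) (nhds 0) := by
    have := ((((base θ hθ0).const_mul C).add ((base p hp0).const_mul T)).add
      ((base θ hθ0).const_mul C)).add ((base (θ+1) (by linarith)).const_mul C)
    simpa using this
  refine squeeze_zero' (hmem.mono fun x hx => ?_) (hmem.mono fun x hx => ?_) hg
  · -- nonnegativity
    rw [hdef x hx.1]
    have h1 : (0:ℝ) ≤ (ν {z | x < ‖z‖}).toReal := ENNReal.toReal_nonneg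
    have h2 : (0:ℝ) ≤ ∫ z in {z | ‖z‖ ≤ x}, ‖z‖ ^ 2 ∂ν :=
      integral_nonneg fun z => by positivity
    have h3 : (0:ℝ) ≤ x ^ (-2:ℝ) := Real.rpow_nonneg hx.1.le _
    have h4 : (0:ℝ) ≤ x ^ p := Real.rpow_nonneg hx.1.le _
    have h5 : (0:ℝ) ≤ ‖∫ z in {z | ‖z‖ ≤ x}, (‖z‖ ^ 2 / (1 + ‖z‖ ^ 2)) • z ∂ν‖ :=
      norm_nonneg _
    have h6 : (0:ℝ) ≤ x⁻¹ := inv_nonneg.2 hx.1.le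
    exact mul_nonneg h4 (add_nonneg (add_nonneg h1 (mul_nonneg h3 h2))
      (mul_nonneg h6 h5))
  · -- the bound
    obtain ⟨hx0, hx1⟩ := hx
    rw [hdef x hx0, mul_add, mul_add]
    have hB1 := key1 x hx0 hx1
    have hxp : (0:ℝ) ≤ x ^ p := Real.rpow_nonneg hx0.le _
    have e2 : x ^ p * x ^ (-2:ℝ) * x ^ (2 - η) = x ^ θ := by
      rw [← Real.rpow_add hx0, ← Real.rpow_add hx0]
      congr 1; simp [hθdef]; ring
    have e3 : x ^ p * x⁻¹ * x ^ (2 - η) = x ^ (θ + 1) := by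
      rw [← Real.rpow_neg_one x, ← Real.rpow_add hx0, ← Real.rpow_add hx0]
      congr 1; simp [hθdef]; ring
    have hB2 : x ^ p * (x ^ (-2:ℝ) * ∫ z in {z | ‖z‖ ≤ x}, ‖z‖ ^ 2 ∂ν) ≤ C * x ^ θ := by
      have h1 : (0:ℝ) ≤ x ^ p * x ^ (-2:ℝ) :=
        mul_nonneg hxp (Real.rpow_nonneg hx0.le _)
      calc x ^ p * (x ^ (-2:ℝ) * ∫ z in {z | ‖z‖ ≤ x}, ‖z‖ ^ 2 ∂ν)
          = x ^ p * x ^ (-2:ℝ) * ∫ z in {z | ‖z‖ ≤ x}, ‖z‖ ^ 2 ∂ν := by ring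
        _ ≤ x ^ p * x ^ (-2:ℝ) * (x ^ (2 - η) * C) :=
            mul_le_mul_of_nonneg_left (key2 x hx0 hx1) h1
        _ = x ^ p * x ^ (-2:ℝ) * x ^ (2 - η) * C := by ring
        _ = C * x ^ θ := by rw [e2]; ring
    have hB3 : x ^ p * (x⁻¹ * ‖∫ z in {z | ‖z‖ ≤ x}, (‖z‖ ^ 2 / (1 + ‖z‖ ^ 2)) • z ∂ν‖)
        ≤ C * x ^ (θ + 1) := by
      have h1 : (0:ℝ) ≤ x ^ p * x⁻¹ := mul_nonneg hxp (inv_nonneg.2 hx0.le)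
      calc x ^ p * (x⁻¹ * ‖∫ z in {z | ‖z‖ ≤ x}, (‖z‖ ^ 2 / (1 + ‖z‖ ^ 2)) • z ∂ν‖)
          = x ^ p * x⁻¹ * ‖∫ z in {z | ‖z‖ ≤ x}, (‖z‖ ^ 2 / (1 + ‖z‖ ^ 2)) • z ∂ν‖ := by
            ring
        _ ≤ x ^ p * x⁻¹ * (x ^ (2 - η) * C) :=
            mul_le_mul_of_nonneg_left (key3 x hx0 hx1) h1
        _ = x ^ p * x⁻¹ * x ^ (2 - η) * C := by ring
        _ = C * x ^ (θ + 1) := by rw [e3]; ring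
    linarith
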